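/- For every integer ℓ ≥ 1, the coefficient D_ℓ satisfies 0 < D_ℓ < 2 · 3^{ℓ−1}. -/

import Mathlib

open Real

/-- `D_ℓ = (−1)^{ℓ+1}·((ℓ+1)/4^ℓ)·∑_{k=0}^{ℓ+1} (−1)^k·2^k·C(2ℓ,k)/(ℓ+1−k)!`. -/
noncomputable def Dcoef (l : ℕ) : ℝ :=
  (-1) ^ (l + 1) * (((l : ℝ) + 1) / 4 ^ l) *
    ∑ k ∈ Finset.range (l + 2),
      (-1) ^ k * 2 ^ k * (Nat.choose (2 * l) k : ℝ) / (Nat.factorial (l + 1 - k) : ℝ)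

private lemma alt_peel (b : ℕ → ℝ) (n : ℕ) :
    ∑ j ∈ Finset.range (n+1), (-1:ℝ)^j * b j
      = b 0 - ∑ j ∈ Finset.range n, (-1:ℝ)^j * b (j+1) := by
  rw [Finset.sum_range_succ' (fun j => (-1:ℝ)^j * b j) n]
  have h : ∀ j ∈ Finset.range n, (-1:ℝ)^(j+1) * b (j+1) = -((-1:ℝ)^j * b (j+1)) :=
    fun j _ => by ring
  rw [Finset.sum_congr rfl h, Finset.sum_neg_distrib]
  ring

private lemma alt_bounds (b : ℕ → ℝ) (hm : ∀ i, b (i+1) ≤ b i) (h0 : ∀ i, 0 ≤ b i) :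
    ∀ n : ℕ, 0 ≤ ∑ j ∈ Finset.range n, (-1:ℝ)^j * b j ∧
      ∑ j ∈ Finset.range n, (-1:ℝ)^j * b j ≤ b 0 := by
  intro n
  induction n generalizing b with
  | zero => simpa using h0 0
  | succ n ih =>
    obtain ⟨h1, h2⟩ := ih (fun i => b (i+1)) (fun i => hm (i+1)) (fun i => h0 (i+1))
    rw [alt_peel]
    constructor
    · have := hm 0
      linarith
    · linarith

private lemma alt_peel3 (b : ℕ → ℝ) (n : ℕ) :
    ∑ j ∈ Finset.range (n+1+1+1), (-1:ℝ)^j * b j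
      = b 0 - b 1 + b 2 - ∑ j ∈ Finset.range n, (-1:ℝ)^j * b (j+3) := by
  rw [alt_peel b (n+1+1), alt_peel (fun j => b (j+1)) (n+1), alt_peel (fun j => b (j+1+1)) n]
  have h3 : ∀ j : ℕ, j+1+1+1 = j+3 := fun j => by omega
  simp only [h3]
  ring

private lemma key_shift : ∀ m : ℕ, (5*(m+1)+6)*2^(m+1) < 12*3^(m+1) := by
  intro m
  induction m with
  | zero => norm_num
  | succ k ih =>
    have h1 : (5*(k+1+1)+6)*2^(k+1+1) ≤ 3*((5*(k+1)+6)*2^(k+1)) := by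
      have : (2:ℕ)^(k+1+1) = 2*2^(k+1) := by ring
      rw [this]
      nlinarith [Nat.one_le_two_pow (n := k+1)]
    calc (5*(k+1+1)+6)*2^(k+1+1) ≤ 3*((5*(k+1)+6)*2^(k+1)) := h1
      _ < 3*(12*3^(k+1)) := by omega
      _ = 12*3^(k+1+1) := by ring

private lemma key_ineq : ∀ m : ℕ, (5*m+6)*2^m < 12*3^m := by
  intro m
  match m with
  | 0 => norm_num
  | (n+1) => exact key_shift n

private lemma cb_le : ∀ n : ℕ, 1 ≤ n → 2 * Nat.centralBinom n ≤ 4^n := by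
  intro n hn
  induction n with
  | zero => omega
  | succ k ih =>
    rcases Nat.eq_or_lt_of_le hn with h | h
    · simp [← h, Nat.centralBinom]
    · have hk : 1 ≤ k := by omega
      have ihk := ih hk
      have hstep : Nat.centralBinom (k+1) ≤ 4 * Nat.centralBinom k := by
        have h1 := Nat.succ_mul_centralBinom_succ k
        have h2 : (k+1) * Nat.centralBinom (k+1) ≤ (k+1) * (4 * Nat.centralBinom k) := by
          rw [h1]; nlinarith [Nat.centralBinom_pos k]
        exact Nat.le_of_mul_le_mul_left h2 (by omega)
      calc 2 * Nat.centralBinom (k+1) ≤ 2 * (4 * Nat.centralBinom k) := by omega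
        _ = 4 * (2 * Nat.centralBinom k) := by ring
        _ ≤ 4 * 4^k := by omega
        _ = 4^(k+1) := by ring

private noncomputable def aa (l k : ℕ) : ℝ :=
  2^k * (Nat.choose (2*l) k : ℝ) / (Nat.factorial (l+1-k) : ℝ)

private lemma aa_nonneg (l k : ℕ) : 0 ≤ aa l k := by
  unfold aa; positivity

private lemma aa_strict (m k : ℕ) (hk : k ≤ m+2) : aa (m+2) k < aa (m+2) (k+1) := by
  obtain ⟨d, hd⟩ : ∃ d, m+2 = k + d := ⟨m+2-k, by omega⟩
  have hCpos : 0 < Nat.choose (2*(m+2)) k := Nat.choose_pos (by omega)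
  have e := Nat.choose_succ_right_eq (2*(m+2)) k
  rw [show 2*(m+2) - k = k + 2*d from by omega] at e
  have hnat : Nat.choose (2*(m+2)) k < 2 * (d+1) * Nat.choose (2*(m+2)) (k+1) := by
    have h2 : 2 ≤ k + d := by omega
    have hlt : k + 1 < 2*(d+1)*(k+2*d) := by nlinarith [Nat.zero_le (k*d), Nat.zero_le (d*d)]
    have hmul : Nat.choose (2*(m+2)) k * (k+1)
        < 2*(d+1)*Nat.choose (2*(m+2)) (k+1) * (k+1) := by
      calc Nat.choose (2*(m+2)) k * (k+1)
          < Nat.choose (2*(m+2)) k * (2*(d+1)*(k+2*d)) := by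
            exact Nat.mul_lt_mul_of_le_of_lt (le_refl _) hlt hCpos
        _ = 2*(d+1)*(Nat.choose (2*(m+2)) (k+1) * (k+1)) := by rw [e]; ring
        _ = 2*(d+1)*Nat.choose (2*(m+2)) (k+1) * (k+1) := by ring
    exact Nat.lt_of_mul_lt_mul_right hmul
  unfold aa
  rw [show m+2+1-k = (m+2-k)+1 from by omega, show m+2+1-(k+1) = m+2-k from by omega,
    Nat.factorial_succ, show m+2-k = d from by omega]
  rw [div_lt_div_iff₀ (by positivity) (by positivity)]
  have hcast : (Nat.choose (2*(m+2)) k : ℝ) < 2*(d+1)*(Nat.choose (2*(m+2)) (k+1) : ℝ) := by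
    exact_mod_cast hnat
  have hfp : (0:ℝ) < (Nat.factorial d : ℝ) := by positivity
  have h2p : (0:ℝ) < (2:ℝ)^k := by positivity
  push_cast
  rw [pow_succ]
  nlinarith [mul_lt_mul_of_pos_right hcast (mul_pos h2p hfp)]

/-- `0 < D_ℓ < 2·3^{ℓ−1}` for every `ℓ ≥ 1`. -/
theorem stmt14 (l : ℕ) (hl : 1 ≤ l) :
    0 < Dcoef l ∧ Dcoef l < 2 * 3 ^ (l - 1) := by
  rcases Nat.lt_or_ge l 2 with h1 | h2
  · have hl1 : l = 1 := by omega
    subst hl1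
    have hD : Dcoef 1 = 1/4 := by
      norm_num [Dcoef, Finset.sum_range_succ, Nat.choose, Nat.factorial]
    rw [hD]
    norm_num
  · obtain ⟨m, rfl⟩ : ∃ m, l = m+2 := ⟨l-2, by omega⟩
    set B : ℕ → ℝ := fun j => aa (m+2) (m+3-j) with hB
    have hBm : ∀ i, B (i+1) ≤ B i := by
      intro i
      simp only [hB]
      rcases Nat.lt_or_ge i (m+3) with h | h
      · rw [show m+3-i = (m+3-(i+1))+1 from by omega]
        exact le_of_lt (aa_strict m (m+3-(i+1)) (by omega))
      · rw [show m+3-(i+1) = 0 from by omega, show m+3-i = 0 from by omega]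
    have hB0 : ∀ i, 0 ≤ B i := fun i => aa_nonneg _ _
    have hD : Dcoef (m+2)
        = (((m:ℝ)+3)/4^(m+2)) * ∑ j ∈ Finset.range (m+2+2), (-1:ℝ)^j * B j := by
      have hs2 : ∀ j ∈ Finset.range (m+2+2),
          (-1:ℝ)^j * B j =
          (-1:ℝ)^(m+2+1) * ((-1:ℝ)^(m+2+2-1-j) * 2^(m+2+2-1-j) *
            ((Nat.choose (2*(m+2)) (m+2+2-1-j)) : ℝ)
              / ((Nat.factorial (m+2+1-(m+2+2-1-j))) : ℝ)) := by
        intro j hj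
        simp only [Finset.mem_range] at hj
        rw [show m+2+2-1-j = m+3-j from by omega, show m+2+1-(m+3-j) = j from by omega]
        have hsign : ((-1:ℝ))^(m+2+1) * (-1:ℝ)^(m+3-j) = (-1:ℝ)^j := by
          rw [← pow_add, show (m+2+1) + (m+3-j) = j + 2*(m+3-j) from by omega, pow_add,
            pow_mul, neg_one_sq, one_pow, mul_one]
        simp only [hB]
        unfold aa
        rw [show m+2+1-(m+3-j) = j from by omega]
        linear_combination (-(2:ℝ)^(m+3-j) * ((Nat.choose (2*(m+2)) (m+3-j)) : ℝ)
          / ((Nat.factorial j) : ℝ)) * hsign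
      rw [Finset.sum_congr rfl hs2, ← Finset.mul_sum]
      simp only [Dcoef]
      rw [← Finset.sum_range_reflect
        (fun k => (-1:ℝ)^k * 2^k * ((Nat.choose (2*(m+2)) k) : ℝ)
          / ((Nat.factorial (m+2+1-k)) : ℝ)) (m+2+2)]
      push_cast
      ring
    obtain ⟨hU0, hU1⟩ := alt_bounds (fun j => B (j+3)) (fun i => hBm (i+3))
      (fun i => hB0 _) (m+1)
    have hU1' : ∑ j ∈ Finset.range (m+1), (-1:ℝ)^j * B (j+3) ≤ B 3 := by simpa using hU1
    have hU0' : 0 ≤ ∑ j ∈ Finset.range (m+1), (-1:ℝ)^j * B (j+3) := hU0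
    rw [show m+2+2 = m+1+1+1+1 from by omega] at hD
    have hpeel := alt_peel3 B (m+1)
    have e0 : B 0 = 2^(m+3) * (Nat.choose (2*(m+2)) (m+3) : ℝ) := by
      simp only [hB]
      unfold aa
      rw [show m+3-0 = m+3 from by omega, show m+2+1-(m+3) = 0 from by omega]
      norm_num [Nat.factorial]
    have e1 : B 1 = 2^(m+2) * (Nat.choose (2*(m+2)) (m+2) : ℝ) := by
      simp only [hB]
      unfold aa
      rw [show m+3-1 = m+2 from by omega, show m+2+1-(m+2) = 1 from by omega]
      norm_num [Nat.factorial]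
    have e2' : B 2 = 2^(m+1) * (Nat.choose (2*(m+2)) (m+1) : ℝ) / 2 := by
      simp only [hB]
      unfold aa
      rw [show m+3-2 = m+1 from by omega, show m+2+1-(m+1) = 2 from by omega]
      norm_num [Nat.factorial]
    have e3 : B 3 = aa (m+2) m := by
      simp only [hB]
      rw [show m+3-3 = m from by omega]
    have hlt1 : B 1 < B 0 := by
      simp only [hB]
      rw [show m+3-1 = m+2 from by omega, show m+3-0 = m+3 from by omega,
        show m+3 = (m+2)+1 from by omega]
      exact aa_strict m (m+2) (le_refl _)
    have hlt2 : aa (m+2) m < B 2 := by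
      simp only [hB]
      rw [show m+3-2 = m+1 from by omega]
      exact aa_strict m m (by omega)
    have hTpos : 0 < ∑ j ∈ Finset.range (m+1+1+1+1), (-1:ℝ)^j * B j := by
      rw [hpeel]
      linarith [hU1', hlt1, hlt2, e3 ▸ hU1']
    have hTub : ∑ j ∈ Finset.range (m+1+1+1+1), (-1:ℝ)^j * B j ≤ B 0 - B 1 + B 2 := by
      rw [hpeel]
      linarith [hU0']
    have hc : (0:ℝ) < ((m:ℝ)+3)/4^(m+2) := by positivity
    constructor
    · rw [hD]
      exact mul_pos hc hTpos
    · rw [hD, show m+2-1 = m+1 from by omega]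
      have step1 : (((m:ℝ)+3)/4^(m+2)) * (∑ j ∈ Finset.range (m+1+1+1+1), (-1:ℝ)^j * B j)
          ≤ (((m:ℝ)+3)/4^(m+2)) * (B 0 - B 1 + B 2) :=
        mul_le_mul_of_nonneg_left hTub (le_of_lt hc)
      have step2 : (((m:ℝ)+3)/4^(m+2)) * (B 0 - B 1 + B 2) < 2*3^(m+1) := by
        rw [e0, e1, e2']
        have hsymm : (Nat.choose (2*(m+2)) (m+1) : ℝ) = (Nat.choose (2*(m+2)) (m+3) : ℝ) := by
          have h := Nat.choose_symm (show m+3 ≤ 2*(m+2) from by omega)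
          rw [show 2*(m+2)-(m+3) = m+1 from by omega] at h
          exact_mod_cast h
        have hrec : (Nat.choose (2*(m+2)) (m+3) : ℝ) * ((m:ℝ)+3)
            = (Nat.choose (2*(m+2)) (m+2) : ℝ) * ((m:ℝ)+2) := by
          have h := Nat.choose_succ_right_eq (2*(m+2)) (m+2)
          rw [show 2*(m+2)-(m+2) = m+2 from by omega, show (m+2)+1 = m+3 from by omega] at h
          exact_mod_cast h
        have hcb : (Nat.choose (2*(m+2)) (m+2) : ℝ) * 2 ≤ 4^(m+2) := by
          have h := cb_le (m+2) (by omega)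
          rw [Nat.centralBinom_eq_two_mul_choose] at h
          have h' : Nat.choose (2*(m+2)) (m+2) * 2 ≤ 4^(m+2) := by omega
          exact_mod_cast h'
        have hkey : (5*(m:ℝ)+6)*2^m < 12*3^m := by exact_mod_cast key_ineq m
        rw [div_mul_eq_mul_div, div_lt_iff₀ (by positivity)]
        have hX : ((m:ℝ)+3) * (2^(m+3) * (Nat.choose (2*(m+2)) (m+3) : ℝ)
              - 2^(m+2) * (Nat.choose (2*(m+2)) (m+2) : ℝ)
              + 2^(m+1) * (Nat.choose (2*(m+2)) (m+1) : ℝ) / 2)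
            = (Nat.choose (2*(m+2)) (m+2) : ℝ) * 2^m * (5*(m:ℝ)+6) := by
          linear_combination ((2:ℝ)^(m+3) + 2^m) * hrec + ((m:ℝ)+3) * 2^m * hsymm
        rw [hX, show (3:ℝ)^(m+1) = 3^m*3 from pow_succ 3 m]
        have p1 : (0:ℝ) ≤ (5*(m:ℝ)+6)*2^m := by positivity
        have p2 : (0:ℝ) < (4:ℝ)^(m+2) := by positivity
        nlinarith [mul_le_mul_of_nonneg_right hcb p1, mul_lt_mul_of_pos_right hkey p2]
      linarith [step1, step2]
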